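/- Let g : [0,∞) → ℝ be convex and continuously differentiable, and let a > 0 satisfy a·g'(a) − g(a) + g(0) = 1/2. Then for every μ ∈ ℝ and σ > 0, ∫_ℝ max((1/σ)(g'(a) − g'(|t−μ|/σ)), 0) dt = 1; that is, λ = −g'(a)/σ normalizes the location-scale density [−λ − (1/σ) g'(|t−μ|/σ)]_+. -/

import Mathlib

open Real

/-- Normalization of the continuous sparsemax location-scale density
`[(1/σ)(g'(a) − g'(|t−μ|/σ))]₊`, where `g` is convex and continuously differentiable
on `[0,∞)` and `a > 0` satisfies `a g'(a) − g(a) + g(0) = 1/2`. -/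
theorem stmt_12 (g g' : ℝ → ℝ)
    (hconv : ConvexOn ℝ (Set.Ici 0) g)
    (hderiv : ∀ s ∈ Set.Ici (0 : ℝ), HasDerivWithinAt g (g' s) (Set.Ici 0) s)
    (hcont : ContinuousOn g' (Set.Ici 0))
    (a : ℝ) (ha : 0 < a) (haeq : a * g' a - g a + g 0 = 1 / 2)
    (μ σ : ℝ) (hσ : 0 < σ) :
    (∫ t : ℝ, max ((1 / σ) * (g' a - g' (|t - μ| / σ))) 0) = 1 := by
  set f : ℝ → ℝ := fun t => max ((1 / σ) * (g' a - g' (|t - μ| / σ))) 0 with hf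
  -- monotonicity of g' on [0, ∞)
  have hmono : ∀ x ∈ Set.Ici (0:ℝ), ∀ y ∈ Set.Ici (0:ℝ), x ≤ y → g' x ≤ g' y := by
    intro x hx y hy hxy
    rcases eq_or_lt_of_le hxy with rfl | h
    · exact le_refl _
    · exact (hconv.le_slope_of_hasDerivWithinAt hx hy h (hderiv x hx)).trans
        (hconv.slope_le_of_hasDerivWithinAt hx hy h (hderiv y hy))
  have habs : ∀ t : ℝ, |t - μ| / σ ∈ Set.Ici (0:ℝ) :=
    fun t => div_nonneg (abs_nonneg _) hσ.le
  have hginner : Continuous fun t : ℝ => g' (|t - μ| / σ) :=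
    hcont.comp_continuous (by continuity) habs
  have hfc : Continuous f :=
    (continuous_const.mul (continuous_const.sub hginner)).max continuous_const
  -- f vanishes outside [μ - σa, μ + σa]
  have hzero : ∀ t ∉ Set.Icc (μ - σ*a) (μ + σ*a), f t = 0 := by
    intro t ht
    have h1 : a ≤ |t - μ| / σ := by
      rw [le_div_iff₀ hσ]
      rw [Set.mem_Icc, not_and_or] at ht
      rw [le_abs]
      rcases ht with h | h
      · push_neg at h; right; nlinarith
      · push_neg at h; left; nlinarith
    have h2 : g' a ≤ g' (|t-μ|/σ) := hmono a ha.le _ (habs t) h1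
    apply max_eq_right
    apply mul_nonpos_of_nonneg_of_nonpos (by positivity)
    linarith
  have hab1 : μ - σ*a ≤ μ + σ*a := by nlinarith
  have hab2 : μ ≤ μ + σ*a := by nlinarith
  have hab3 : μ - σ*a ≤ μ := by nlinarith
  -- reduce to an interval integral
  have key : (∫ t, f t) = ∫ t in (μ - σ*a)..(μ + σ*a), f t := by
    rw [intervalIntegral.integral_of_le hab1, ← MeasureTheory.integral_Icc_eq_integral_Ioc,
      ← MeasureTheory.integral_indicator measurableSet_Icc]
    congr 1
    funext t
    by_cases h : t ∈ Set.Icc (μ - σ*a) (μ + σ*a)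
    · rw [Set.indicator_of_mem h]
    · rw [Set.indicator_of_notMem h, hzero t h]
  -- symmetry: left half equals right half
  have hsymm : (∫ t in (μ - σ*a)..μ, f t) = ∫ t in μ..(μ + σ*a), f t := by
    have h := intervalIntegral.integral_comp_sub_left (a := μ) (b := μ + σ*a) f (2*μ)
    have heq : ∀ t : ℝ, f (2*μ - t) = f t := by
      intro t
      have : |2*μ - t - μ| = |t - μ| := by
        rw [abs_sub_comm]; congr 1; ring
      simp only [hf, this]
    simp only [heq] at h
    rw [h]
    congr 1 <;> ring
  -- FTC on [0, a]
  have hFTC : (∫ x in (0:ℝ)..a, g' x) = g a - g 0 := by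
    apply intervalIntegral.integral_eq_sub_of_hasDeriv_right_of_le ha.le
    · exact fun x hx => ((hderiv x hx.1).continuousWithinAt).mono Set.Icc_subset_Ici_self
    · intro x hx
      exact ((hderiv x hx.1.le).hasDerivAt (Ici_mem_nhds hx.1)).hasDerivWithinAt
    · apply ContinuousOn.intervalIntegrable
      apply hcont.mono
      rw [Set.uIcc_of_le ha.le]
      exact Set.Icc_subset_Ici_self
  -- value of the right half
  have hR : (∫ t in μ..(μ + σ*a), f t) = 1/2 := by
    have hcongr : Set.EqOn f (fun t => (1/σ) * (g' a - g' ((t - μ)/σ)))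
        (Set.uIcc μ (μ + σ*a)) := by
      intro t ht
      rw [Set.uIcc_of_le hab2] at ht
      obtain ⟨h1, h2⟩ := ht
      have habs' : |t - μ| = t - μ := abs_of_nonneg (by linarith)
      simp only [hf, habs']
      apply max_eq_left
      apply mul_nonneg (by positivity)
      have hle : (t - μ)/σ ≤ a := by rw [div_le_iff₀ hσ]; nlinarith
      have := hmono _ (div_nonneg (by linarith) hσ.le) a ha.le hle
      linarith
    rw [intervalIntegral.integral_congr hcongr]
    have hint : IntervalIntegrable (fun t => g' ((t - μ)/σ)) MeasureTheory.volume μ (μ + σ*a) := by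
      apply ContinuousOn.intervalIntegrable
      apply hcont.comp (((continuous_id.sub continuous_const).div_const σ).continuousOn)
      intro t ht
      rw [Set.uIcc_of_le hab2] at ht
      simp only [id_eq]
      exact div_nonneg (by show 0 ≤ t - μ; linarith [ht.1]) hσ.le
    rw [intervalIntegral.integral_const_mul,
      intervalIntegral.integral_sub intervalIntegrable_const hint,
      intervalIntegral.integral_const]
    have h1 : (∫ t in μ..(μ + σ*a), g' ((t - μ)/σ)) = σ * (g a - g 0) := by
      have e1 := intervalIntegral.integral_comp_sub_right (a := μ) (b := μ + σ*a)
        (fun x => g' (x/σ)) μ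
      simp only [sub_self, add_sub_cancel_left] at e1
      rw [e1, intervalIntegral.integral_comp_div (fun x => g' x) hσ.ne']
      rw [zero_div, mul_div_cancel_left₀ _ hσ.ne', hFTC, smul_eq_mul]
    rw [h1]
    simp only [add_sub_cancel_left, smul_eq_mul]
    field_simp
    nlinarith [haeq]
  -- combine
  have hadd : (∫ t in (μ - σ*a)..(μ + σ*a), f t)
      = (∫ t in (μ - σ*a)..μ, f t) + ∫ t in μ..(μ + σ*a), f t :=
    (intervalIntegral.integral_add_adjacent_intervals
      (hfc.intervalIntegrable _ _) (hfc.intervalIntegrable _ _)).symm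
  rw [key, hadd, hsymm, hR]
  norm_num
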